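/- Let A be a finite-dimensional descendingly alternative algebra over a field F and let S ⊆ A. Then Lin_{2d₁(S)+1}(S) = Lin_{2d₁(S)}(S), and consequently l(S) ≤ 2d₁(S), where d₁(S) = dim Lin_1(S) − dim Lin_0(S). -/

import Mathlib

open Pointwise

set_option linter.unusedSectionVars false

namespace DescLength

variable (F : Type*) [Field F] {A : Type*} [NonUnitalNonAssocRing A] [Module F A]

/-- `Word S n a` means that `a` is a word of length `n` in letters from `S`,
i.e. a product of `n` elements of `S` with some arrangement of brackets. -/
inductive Word (S : Set A) : ℕ → A → Prop
  | of {a : A} : a ∈ S → Word S 1 a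
  | mul {m n : ℕ} {a b : A} : Word S m a → Word S n b → Word S (m + n) (a * b)

/-- The set of words of length exactly `n` in letters from `S`. -/
def words (S : Set A) (n : ℕ) : Set A := {a | Word S n a}

/-- `Lin_k(S)`, where the submodule `o` plays the role of `Lin_0(S)`:
`o = ⊥` if `A` is non-unital and `o = span F {e}` if `A` is unital with unity `e`. -/
def lin (o : Submodule F A) (S : Set A) (k : ℕ) : Submodule F A :=
  o ⊔ Submodule.span F (⋃ i ∈ Finset.Icc 1 k, words S i)

/-- `Lin_∞(S)`. -/
def linInfty (o : Submodule F A) (S : Set A) : Submodule F A := ⨆ k, lin F o S k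

/-- `S` is a generating set for `A`. -/
def Generates (o : Submodule F A) (S : Set A) : Prop := linInfty F o S = ⊤

/-- The length of the set `S`: `l(S) = min {k | Lin_k(S) = Lin_∞(S)}`. -/
noncomputable def len (o : Submodule F A) (S : Set A) : ℕ := sInf {k | lin F o S k = linInfty F o S}

/-- The length of the algebra `A`: `l(A) = max {l(S) | S generates A}`. -/
noncomputable def algLen (o : Submodule F A) : ℕ := sSup {n | ∃ S : Set A, Generates F o S ∧ len F o S = n}

/-- The sequence of differences `d_k(S)`. -/
noncomputable def dseq (o : Submodule F A) (S : Set A) : ℕ → ℕ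
  | 0 => Module.finrank F o
  | k + 1 => Module.finrank F (lin F o S (k + 1)) - Module.finrank F (lin F o S k)

/-- `o` is the span of the words of length zero: `⊥` if `A` has no two-sided unity,
and the span of the unity `e` otherwise. -/
def IsUnitalSpan (o : Submodule F A) : Prop :=
  ((¬ ∃ e : A, ∀ x : A, e * x = x ∧ x * e = x) ∧ o = ⊥) ∨
  (∃ e : A, (∀ x : A, e * x = x ∧ x * e = x) ∧ o = Submodule.span F {e})

def Ql (x y z : A) : Set A :=
  {x*(z*y), x*(y*z), y*(x*z), y*(z*x), x*y, y*x, x*z, z*x, y*z, z*y, x, y, z}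

def Qr (x y z : A) : Set A :=
  {(x*z)*y, (z*x)*y, (y*z)*x, (z*y)*x, x*y, y*x, x*z, z*x, y*z, z*y, x, y, z}

def Pset (x y z : A) : Set A := Ql x y z ∪ Qr x y z

/-- `A` is mixing: `(xy)z, z(xy) ∈ Lin_1(P(x,y,z))` for all `x, y, z`. -/
def IsMixing (o : Submodule F A) : Prop :=
  ∀ x y z : A, (x*y)*z ∈ o ⊔ Submodule.span F (Pset x y z) ∧
    z*(x*y) ∈ o ⊔ Submodule.span F (Pset x y z)

/-- `A` is left sliding: `(xy)z ∈ Lin_1(Q_l(x,y,z))` for all `x, y, z`. -/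
def IsLeftSliding (o : Submodule F A) : Prop :=
  ∀ x y z : A, (x*y)*z ∈ o ⊔ Submodule.span F (Ql x y z)

/-- `A` is right sliding: `z(xy) ∈ Lin_1(Q_r(x,y,z))` for all `x, y, z`. -/
def IsRightSliding (o : Submodule F A) : Prop :=
  ∀ x y z : A, z*(x*y) ∈ o ⊔ Submodule.span F (Qr x y z)

/-- `Lin_1(a, b, aa, ab, ba)`. -/
def lin1five (o : Submodule F A) (a b : A) : Submodule F A :=
  o ⊔ Submodule.span F {a, b, a*a, a*b, b*a}

/-- `Lin'_2(a, b, c)`. -/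
def lin2' (o : Submodule F A) (a b c : A) : Submodule F A :=
  o ⊔ Submodule.span F {a, b, c, a*b, b*a, b*c, c*b, a*c, c*a}

/-- `A` is descendingly flexible. -/
def IsDescFlexible (o : Submodule F A) : Prop :=
  ∀ a b c : A, (a*b)*a ∈ lin1five F o a b ∧ a*(b*a) ∈ lin1five F o a b ∧
    (a*b)*c + (c*b)*a ∈ lin2' F o a b c ∧ a*(b*c) + c*(b*a) ∈ lin2' F o a b c

/-- `A` is descendingly alternative. -/
def IsDescAlternative (o : Submodule F A) : Prop :=
  ∀ a b c : A, (b*a)*a ∈ lin1five F o a b ∧ a*(a*b) ∈ lin1five F o a b ∧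
    (a*b)*c + (a*c)*b ∈ lin2' F o a b c ∧ a*(b*c) + b*(a*c) ∈ lin2' F o a b c

/-- `S^{(m)}`: the words obtained from a letter of `S` by repeatedly multiplying by a single
letter of `S`, on the left or on the right. -/
def chainWords (S : Set A) : ℕ → Set A
  | 0 => ∅
  | 1 => S
  | n + 2 => chainWords S (n + 1) * S ∪ S * chainWords S (n + 1)



section Basic

variable {F} {o : Submodule F A} {S : Set A}

lemma lin_zero : lin F o S 0 = o := by
  have h : Finset.Icc 1 0 = (∅ : Finset ℕ) := by
    apply Finset.Icc_eq_empty; omega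
  rw [lin, h]
  have : (⋃ i ∈ (∅ : Finset ℕ), words S i) = (∅ : Set A) := by simp
  rw [this, Submodule.span_empty, sup_bot_eq]

lemma lin_mono {k l : ℕ} (h : k ≤ l) : lin F o S k ≤ lin F o S l := by
  apply sup_le_sup_left
  apply Submodule.span_mono
  apply Set.biUnion_subset_biUnion_left
  intro i hi
  have := Finset.mem_Icc.mp hi
  exact Finset.mem_Icc.mpr (by omega)

lemma o_le_lin {k : ℕ} : o ≤ lin F o S k := le_sup_left

lemma words_le_lin {i k : ℕ} (h1 : 1 ≤ i) (h2 : i ≤ k) :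
    words S i ⊆ (lin F o S k : Set A) := by
  intro w hw
  apply Submodule.mem_sup_right
  apply Submodule.subset_span
  exact Set.mem_biUnion (Finset.mem_Icc.mpr (by omega) : i ∈ Finset.Icc 1 k) hw

lemma word_mem_lin {i k : ℕ} (h1 : 1 ≤ i) (h2 : i ≤ k) {w : A} (hw : Word S i w) :
    w ∈ lin F o S k := words_le_lin h1 h2 hw

lemma lin_succ (k : ℕ) :
    lin F o S (k+1) = lin F o S k ⊔ Submodule.span F (words S (k+1)) := by
  have h : Finset.Icc 1 (k+1) = insert (k+1) (Finset.Icc 1 k) := by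
    ext i
    simp only [Finset.mem_Icc, Finset.mem_insert]
    omega
  have h2 : (⋃ i ∈ Finset.Icc 1 (k+1), words S i) =
      words S (k+1) ∪ ⋃ i ∈ Finset.Icc 1 k, words S i := by
    rw [h]; exact Finset.set_biUnion_insert _ _ _
  rw [lin, h2, Submodule.span_union, lin, sup_assoc,
    sup_comm (Submodule.span F (words S (k+1)))]

end Basic


section Mul

variable {F} {o : Submodule F A} {S : Set A}
variable [SMulCommClass F A A] [IsScalarTower F A A]

lemma word_pos {n : ℕ} {w : A} (h : Word S n w) : 1 ≤ n := by
  induction h with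
  | of _ => exact le_refl 1
  | mul _ _ ih1 ih2 => omega

/-- Multiplication by elements of `o` (scalar multiples of the unity, or zero). -/
lemma o_mul (ho : IsUnitalSpan F o) {z x : A} (hz : z ∈ o) {p : ℕ}
    (hx : x ∈ lin F o S p) : z * x ∈ lin F o S p ∧ x * z ∈ lin F o S p := by
  rcases ho with ⟨-, rfl⟩ | ⟨e, he, rfl⟩
  · simp only [Submodule.mem_bot] at hz
    subst hz
    simp [zero_mul, mul_zero, Submodule.zero_mem]
  · rcases Submodule.mem_span_singleton.mp hz with ⟨c, rfl⟩
    constructor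
    · rw [smul_mul_assoc, (he x).1]
      exact Submodule.smul_mem _ c hx
    · rw [mul_smul_comm, (he x).2]
      exact Submodule.smul_mem _ c hx

lemma mul_mem_lin (ho : IsUnitalSpan F o) {p q : ℕ} {x y : A}
    (hx : x ∈ lin F o S p) (hy : y ∈ lin F o S q) : x * y ∈ lin F o S (p + q) := by
  -- first reduce x: o-part plus span of words
  rw [lin] at hx
  rcases Submodule.mem_sup.mp hx with ⟨xo, hxo, xs, hxs, rfl⟩
  have h1 : xo * y ∈ lin F o S (p + q) :=
    (o_mul ho hxo (lin_mono (Nat.le_add_left q p) hy)).1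
  have h2 : xs * y ∈ lin F o S (p + q) := by
    have : Submodule.span F (⋃ i ∈ Finset.Icc 1 p, words S i) ≤
        Submodule.comap ((LinearMap.mul F A).flip y) (lin F o S (p + q)) := by
      rw [Submodule.span_le]
      intro w hw
      rcases Set.mem_iUnion₂.mp hw with ⟨i, hi, hwi⟩
      have hi' := Finset.mem_Icc.mp hi
      -- now reduce y for this fixed word w
      simp only [SetLike.mem_coe, Submodule.mem_comap, LinearMap.flip_apply, LinearMap.mul_apply']
      rw [lin] at hy
      rcases Submodule.mem_sup.mp hy with ⟨yo, hyo, ys, hys, rfl⟩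
      have g1 : w * yo ∈ lin F o S (p + q) :=
        (o_mul ho hyo (word_mem_lin hi'.1 (by omega) hwi)).2
      have g2 : w * ys ∈ lin F o S (p + q) := by
        have : Submodule.span F (⋃ j ∈ Finset.Icc 1 q, words S j) ≤
            Submodule.comap (LinearMap.mul F A w) (lin F o S (p + q)) := by
          rw [Submodule.span_le]
          intro u hu
          rcases Set.mem_iUnion₂.mp hu with ⟨j, hj, huj⟩
          have hj' := Finset.mem_Icc.mp hj
          simp only [SetLike.mem_coe, Submodule.mem_comap, LinearMap.mul_apply']
          exact word_mem_lin (by omega) (by omega) (Word.mul hwi huj)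
        have := this hys
        simpa using this
      rw [mul_add]
      exact Submodule.add_mem _ g1 g2
    have := this hxs
    simpa using this
  rw [add_mul]
  exact Submodule.add_mem _ h1 h2

end Mul


section Ident

variable {F} {o : Submodule F A} {S : Set A}
variable [SMulCommClass F A A] [IsScalarTower F A A]

lemma lin1five_le (ho : IsUnitalSpan F o) {p q : ℕ} {a b : A} (ha : a ∈ lin F o S p) (hb : b ∈ lin F o S q)
    (hp : 1 ≤ p) (hq : 1 ≤ q) :
    lin1five F o a b ≤ lin F o S (q + 2 * p - 1) := by
  apply sup_le o_le_lin
  rw [Submodule.span_le]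
  intro u hu
  simp only [Set.mem_insert_iff, Set.mem_singleton_iff] at hu
  have haa : a * a ∈ lin F o S (p + p) := mul_mem_lin ho ha ha
  have hab : a * b ∈ lin F o S (p + q) := mul_mem_lin ho ha hb
  have hba : b * a ∈ lin F o S (q + p) := mul_mem_lin ho hb ha
  rcases hu with rfl | rfl | rfl | rfl | rfl
  · exact lin_mono (by omega) ha
  · exact lin_mono (by omega) hb
  · exact lin_mono (by omega) haa
  · exact lin_mono (by omega) hab
  · exact lin_mono (by omega) hba

lemma lin2'_le (ho : IsUnitalSpan F o) {p q r : ℕ} {a b c : A} (ha : a ∈ lin F o S p) (hb : b ∈ lin F o S q)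
    (hc : c ∈ lin F o S r) (hp : 1 ≤ p) (hq : 1 ≤ q) (hr : 1 ≤ r) :
    lin2' F o a b c ≤ lin F o S (p + q + r - 1) := by
  apply sup_le o_le_lin
  rw [Submodule.span_le]
  intro u hu
  simp only [Set.mem_insert_iff, Set.mem_singleton_iff] at hu
  rcases hu with rfl | rfl | rfl | rfl | rfl | rfl | rfl | rfl | rfl
  · exact lin_mono (by omega) ha
  · exact lin_mono (by omega) hb
  · exact lin_mono (by omega) hc
  · exact lin_mono (by omega) (mul_mem_lin ho ha hb)
  · exact lin_mono (by omega) (mul_mem_lin ho hb ha)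
  · exact lin_mono (by omega) (mul_mem_lin ho hb hc)
  · exact lin_mono (by omega) (mul_mem_lin ho hc hb)
  · exact lin_mono (by omega) (mul_mem_lin ho ha hc)
  · exact lin_mono (by omega) (mul_mem_lin ho hc ha)

/-- (I1): `(x·a)·a ∈ M (p + 2q - 1)`. -/
lemma I1 (ho : IsUnitalSpan F o) (halt : IsDescAlternative F o) {p q : ℕ} {x a : A} (hx : x ∈ lin F o S p) (ha : a ∈ lin F o S q)
    (hp : 1 ≤ p) (hq : 1 ≤ q) : (x * a) * a ∈ lin F o S (p + 2 * q - 1) :=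
  lin1five_le ho ha hx hq hp (halt a x 0).1

/-- (I2): `a·(a·x) ∈ M (p + 2q - 1)`. -/
lemma I2 (ho : IsUnitalSpan F o) (halt : IsDescAlternative F o) {p q : ℕ} {x a : A} (hx : x ∈ lin F o S p) (ha : a ∈ lin F o S q)
    (hp : 1 ≤ p) (hq : 1 ≤ q) : a * (a * x) ∈ lin F o S (p + 2 * q - 1) :=
  lin1five_le ho ha hx hq hp (halt a x 0).2.1

/-- (I3): `(x·y)·z + (x·z)·y ∈ M (p+q+r-1)`. -/
lemma I3 (ho : IsUnitalSpan F o) (halt : IsDescAlternative F o) {p q r : ℕ} {x y z : A} (hx : x ∈ lin F o S p) (hy : y ∈ lin F o S q)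
    (hz : z ∈ lin F o S r) (hp : 1 ≤ p) (hq : 1 ≤ q) (hr : 1 ≤ r) :
    (x * y) * z + (x * z) * y ∈ lin F o S (p + q + r - 1) :=
  lin2'_le ho hx hy hz hp hq hr (halt x y z).2.2.1

/-- (I4): `x·(y·z) + y·(x·z) ∈ M (p+q+r-1)`. -/
lemma I4 (ho : IsUnitalSpan F o) (halt : IsDescAlternative F o) {p q r : ℕ} {x y z : A} (hx : x ∈ lin F o S p) (hy : y ∈ lin F o S q)
    (hz : z ∈ lin F o S r) (hp : 1 ≤ p) (hq : 1 ≤ q) (hr : 1 ≤ r) :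
    x * (y * z) + y * (x * z) ∈ lin F o S (p + q + r - 1) :=
  lin2'_le ho hx hy hz hp hq hr (halt x y z).2.2.2

end Ident

section Strings

variable {F} {o : Submodule F A} {S : Set A}
variable [SMulCommClass F A A] [IsScalarTower F A A]

/-- Evaluate a list of one-letter multiplications (outermost first) on a base element.
`(true, a)` means multiplication by `a` on the left, `(false, a)` on the right. -/
def evalOps : List (Bool × A) → A → A
  | [], x => x
  | op :: ops, x => if op.1 then op.2 * evalOps ops x else evalOps ops x * op.2

/-- The set of values of strings of `k` one-letter multiplications on a letter. -/
def Ev (S : Set A) (k : ℕ) : Set A :=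
  {a | ∃ ops x₀, ops.length = k ∧ (∀ p ∈ ops, p.2 ∈ S) ∧ x₀ ∈ S ∧ a = evalOps ops x₀}

lemma word_inv {n : ℕ} {a : A} (h : Word S n a) :
    (n = 1 ∧ a ∈ S) ∨ ∃ m k : ℕ, ∃ u v : A, Word S m u ∧ Word S k v ∧
      1 ≤ m ∧ 1 ≤ k ∧ m + k = n ∧ a = u * v := by
  induction h with
  | of h => exact Or.inl ⟨rfl, h⟩
  | mul h1 h2 _ _ =>
    exact Or.inr ⟨_, _, _, _, h1, h2, word_pos h1, word_pos h2, rfl, rfl⟩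

lemma word_one {a : A} (h : Word S 1 a) : a ∈ S := by
  rcases word_inv h with ⟨-, h⟩ | ⟨m, k, u, v, h1, h2, hm, hk, hmk, -⟩
  · exact h
  · omega

lemma S_subset_Ev0 : S ⊆ Ev S 0 := fun x hx => ⟨[], x, rfl, by simp, hx, rfl⟩

lemma Ev_mul_left {k : ℕ} {s c : A} (hs : s ∈ S) (hc : c ∈ Ev S k) :
    s * c ∈ Ev S (k + 1) := by
  obtain ⟨ops, x₀, hlen, hmem, hx₀, rfl⟩ := hc
  exact ⟨(true, s) :: ops, x₀, by simp [hlen], by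
    intro p hp
    rcases List.mem_cons.mp hp with rfl | hp
    · exact hs
    · exact hmem p hp, hx₀, rfl⟩

lemma Ev_mul_right {k : ℕ} {s c : A} (hs : s ∈ S) (hc : c ∈ Ev S k) :
    c * s ∈ Ev S (k + 1) := by
  obtain ⟨ops, x₀, hlen, hmem, hx₀, rfl⟩ := hc
  exact ⟨(false, s) :: ops, x₀, by simp [hlen], by
    intro p hp
    rcases List.mem_cons.mp hp with rfl | hp
    · exact hs
    · exact hmem p hp, hx₀, rfl⟩

lemma Ev_succ_subset {k : ℕ} :
    Ev S (k + 1) ⊆ {a | ∃ s ∈ S, ∃ c ∈ Ev S k, a = s * c ∨ a = c * s} := by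
  rintro a ⟨ops, x₀, hlen, hmem, hx₀, rfl⟩
  match ops, hlen with
  | (b, s) :: ops, hlen =>
    have hs : s ∈ S := hmem _ (List.mem_cons_self)
    have hc : evalOps ops x₀ ∈ Ev S k :=
      ⟨ops, x₀, by simpa using hlen, fun p hp => hmem p (List.mem_cons_of_mem _ hp), hx₀, rfl⟩
    refine ⟨s, hs, evalOps ops x₀, hc, ?_⟩
    cases b
    · right; simp [evalOps]
    · left; simp [evalOps]

/-- Key reduction: every word is, modulo lower terms, a combination of chain words. -/
lemma words_reduce (ho : IsUnitalSpan F o) (halt : IsDescAlternative F o) :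
    ∀ k : ℕ, Submodule.span F (words S (k+1)) ≤
      lin F o S k ⊔ Submodule.span F (Ev S k) := by
  intro k
  induction k using Nat.strong_induction_on with
  | _ k ih =>
    -- helper: multiply a member of the reduced space on the left/right by a letter
    have key_left : ∀ (j : ℕ) (s v : A), s ∈ S →
        v ∈ lin F o S j ⊔ Submodule.span F (Ev S j) →
        s * v ∈ lin F o S (j+1) ⊔ Submodule.span F (Ev S (j+1)) := by
      intro j s v hs hv
      have hsl : s ∈ lin F o S 1 := word_mem_lin le_rfl le_rfl (Word.of hs)
      have : lin F o S j ⊔ Submodule.span F (Ev S j) ≤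
          Submodule.comap (LinearMap.mul F A s)
            (lin F o S (j+1) ⊔ Submodule.span F (Ev S (j+1))) := by
        apply sup_le
        · intro y hy
          simp only [Submodule.mem_comap, LinearMap.mul_apply']
          exact Submodule.mem_sup_left
            (by simpa [Nat.add_comm] using mul_mem_lin ho hsl hy)
        · rw [Submodule.span_le]
          intro c hc
          simp only [SetLike.mem_coe, Submodule.mem_comap, LinearMap.mul_apply']
          exact Submodule.mem_sup_right (Submodule.subset_span (Ev_mul_left hs hc))
      simpa using this hv
    have key_right : ∀ (j : ℕ) (s v : A), s ∈ S →
        v ∈ lin F o S j ⊔ Submodule.span F (Ev S j) →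
        v * s ∈ lin F o S (j+1) ⊔ Submodule.span F (Ev S (j+1)) := by
      intro j s v hs hv
      have hsl : s ∈ lin F o S 1 := word_mem_lin le_rfl le_rfl (Word.of hs)
      have : lin F o S j ⊔ Submodule.span F (Ev S j) ≤
          Submodule.comap ((LinearMap.mul F A).flip s)
            (lin F o S (j+1) ⊔ Submodule.span F (Ev S (j+1))) := by
        apply sup_le
        · intro y hy
          simp only [Submodule.mem_comap, LinearMap.flip_apply, LinearMap.mul_apply']
          exact Submodule.mem_sup_left (mul_mem_lin ho hy hsl)
        · rw [Submodule.span_le]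
          intro c hc
          simp only [SetLike.mem_coe, Submodule.mem_comap, LinearMap.flip_apply,
            LinearMap.mul_apply']
          exact Submodule.mem_sup_right (Submodule.subset_span (Ev_mul_right hs hc))
      simpa using this hv
    rw [Submodule.span_le]
    intro w hw
    simp only [SetLike.mem_coe]
    rcases Nat.eq_zero_or_pos k with rfl | hk
    · exact Submodule.mem_sup_right (Submodule.subset_span (S_subset_Ev0 (word_one hw)))
    obtain ⟨k', rfl⟩ : ∃ k', k = k' + 1 := ⟨k - 1, by omega⟩
    -- k ≥ 1, so w has length ≥ 2 and splits as a product
    -- inner induction on a bound for min of the factor lengths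
    have main : ∀ m₀ : ℕ, ∀ m n : ℕ, ∀ u v : A, Word S m u → Word S n v →
        m + n = (k' + 1) + 1 → min m n ≤ m₀ →
        u * v ∈ lin F o S (k' + 1) ⊔ Submodule.span F (Ev S (k' + 1)) := by
      intro m₀
      induction m₀ with
      | zero =>
        intro m n u v hu hv _ hmin
        have := word_pos hu
        have := word_pos hv
        omega
      | succ m₀ ihm =>
        intro m n u v hu hv hsum hmin
        rcases Nat.lt_or_ge (min m n) (m₀ + 1) with hlt | hge
        · exact ihm m n u v hu hv hsum (by omega)
        have hmineq : min m n = m₀ + 1 := le_antisymm hmin hge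
        have hm1 := word_pos hu
        have hn1 := word_pos hv
        rcases eq_or_lt_of_le hm1 with hm | hm
        · -- m = 1 : left letter
          have huS : u ∈ S := word_one (by rw [← hm] at hu; exact hu)
          have hvk : Word S (k' + 1) v := by
            have : n = k' + 1 := by omega
            rwa [this] at hv
          have hv' : v ∈ lin F o S k' ⊔ Submodule.span F (Ev S k') :=
            ih k' (by omega) (Submodule.subset_span hvk)
          exact key_left k' u v huS hv'
        rcases eq_or_lt_of_le hn1 with hn | hn
        · -- n = 1 : right letter
          have hvS : v ∈ S := word_one (by rw [← hn] at hv; exact hv)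
          have huk : Word S (k' + 1) u := by
            have : m = k' + 1 := by omega
            rwa [this] at hu
          have hu' : u ∈ lin F o S k' ⊔ Submodule.span F (Ev S k') :=
            ih k' (by omega) (Submodule.subset_span huk)
          exact key_right k' v u hvS hu'
        -- both factors have length ≥ 2
        rcases le_or_gt m n with hmn | hnm
        · -- split u
          cases hu with
          | of h => omega
          | @mul m₁ m₂ u₁ u₂ hu₁ hu₂ =>
            have hm₁ := word_pos hu₁
            have hm₂ := word_pos hu₂
            have herr : (u₁ * u₂) * v + (u₁ * v) * u₂ ∈ lin F o S (k' + 1) := by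
              have := I3 (S := S) ho halt (word_mem_lin hm₁ le_rfl hu₁)
                (word_mem_lin hm₂ le_rfl hu₂) (word_mem_lin hn1 le_rfl hv)
                hm₁ hm₂ hn1
              have hkk : m₁ + m₂ + n - 1 = (k' + 1) := by omega
              rwa [hkk] at this
            have hrec : (u₁ * v) * u₂ ∈ lin F o S (k' + 1) ⊔ Submodule.span F (Ev S (k' + 1)) :=
              ihm (m₁ + n) m₂ (u₁ * v) u₂ (Word.mul hu₁ hv) hu₂ (by omega) (by omega)
            have : (u₁ * u₂) * v =
                ((u₁ * u₂) * v + (u₁ * v) * u₂) - (u₁ * v) * u₂ :=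
              (add_sub_cancel_right _ _).symm
            rw [this]
            exact Submodule.sub_mem _ (Submodule.mem_sup_left herr) hrec
        · -- split v
          cases hv with
          | of h => omega
          | @mul n₁ n₂ v₁ v₂ hv₁ hv₂ =>
            have hn₁ := word_pos hv₁
            have hn₂ := word_pos hv₂
            have herr : u * (v₁ * v₂) + v₁ * (u * v₂) ∈ lin F o S (k' + 1) := by
              have := I4 (S := S) ho halt (word_mem_lin hm1 le_rfl hu)
                (word_mem_lin hn₁ le_rfl hv₁) (word_mem_lin hn₂ le_rfl hv₂)
                hm1 hn₁ hn₂
              have hkk : m + n₁ + n₂ - 1 = (k' + 1) := by omega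
              rwa [hkk] at this
            have hrec : v₁ * (u * v₂) ∈ lin F o S (k' + 1) ⊔ Submodule.span F (Ev S (k' + 1)) :=
              ihm n₁ (m + n₂) v₁ (u * v₂) hv₁ (Word.mul hu hv₂) (by omega) (by omega)
            have : u * (v₁ * v₂) =
                (u * (v₁ * v₂) + v₁ * (u * v₂)) - v₁ * (u * v₂) :=
              (add_sub_cancel_right _ _).symm
            rw [this]
            exact Submodule.sub_mem _ (Submodule.mem_sup_left herr) hrec
    -- apply main to the given word of length (k' + 1)+1 ≥ 2
    rcases word_inv hw with ⟨h1, -⟩ | ⟨m, n, u, v, hu, hv, hm, hn, hmn, rfl⟩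
    · omega
    · exact main (min m n) m n u v hu hv hmn le_rfl

lemma lin_succ_le (ho : IsUnitalSpan F o) (halt : IsDescAlternative F o) (k : ℕ) :
    lin F o S (k+1) ≤ lin F o S k ⊔ Submodule.span F (Ev S k) := by
  rw [lin_succ]
  exact sup_le le_sup_left (words_reduce ho halt k)

end Strings

section NF

variable {F}
variable [SMulCommClass F A A] [IsScalarTower F A A]

/-- Right-normed product: `rbw μ v [a₁, ..., aₖ] = ((v·aₖ)·aₖ₋₁ ⋯)·a₁` (head outermost). -/
def rbw (μ : A →ₗ[F] A →ₗ[F] A) (v : A) : List A → A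
  | [] => v
  | a :: ts => μ (rbw μ v ts) a

/-- Left block of multiplications by right-normed products. -/
def lbw (μ : A →ₗ[F] A →ₗ[F] A) (X : A) : List (A × List A) → A
  | [] => X
  | c :: cs => μ (rbw μ c.1 c.2) (lbw μ X cs)

/-- Evaluation of a string of one-sided multiplications, abstract in the product. -/
def evalw (μ : A →ₗ[F] A →ₗ[F] A) : List (Bool × A) → A → A
  | [], x => x
  | op :: ops, x => if op.1 then μ op.2 (evalw μ ops x) else μ (evalw μ ops x) op.2

/-- Normal-form data extracted from a string of operations. -/
def normOps : List (Bool × A) → List (A × List A) × List A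
  | [] => ([], [])
  | (true, v) :: ops => ((v, []) :: (normOps ops).1, (normOps ops).2)
  | (false, a) :: ops =>
      match normOps ops with
      | ([], bs) => ([], a :: bs)
      | ((v, ts) :: cs, bs) => ((v, a :: ts) :: cs, bs)

/-- The value of a normal form. -/
def NFv (μ : A →ₗ[F] A →ₗ[F] A) (x₀ : A) (dat : List (A × List A) × List A) : A :=
  lbw μ (rbw μ x₀ dat.2) dat.1

def wtL (cs : List (A × List A)) : ℕ := (cs.map (fun c => 1 + c.2.length)).sum

variable {o : Submodule F A} {S : Set A}

/-- Hypotheses on an abstract product, satisfied by the product of a descendingly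
alternative algebra and by its opposite product. -/
structure MulHyp (o : Submodule F A) (S : Set A) (μ : A →ₗ[F] A →ₗ[F] A) : Prop where
  hm : ∀ {p q : ℕ} {x y : A}, x ∈ lin F o S p → y ∈ lin F o S q →
    μ x y ∈ lin F o S (p + q)
  hI2 : ∀ {p q : ℕ} {x a : A}, x ∈ lin F o S p → a ∈ lin F o S q → 1 ≤ p → 1 ≤ q →
    μ a (μ a x) ∈ lin F o S (p + 2 * q - 1)
  hI3 : ∀ {p q r : ℕ} {x y z : A}, x ∈ lin F o S p → y ∈ lin F o S q → z ∈ lin F o S r →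
    1 ≤ p → 1 ≤ q → 1 ≤ r → μ (μ x y) z + μ (μ x z) y ∈ lin F o S (p + q + r - 1)
  hI4 : ∀ {p q r : ℕ} {x y z : A}, x ∈ lin F o S p → y ∈ lin F o S q → z ∈ lin F o S r →
    1 ≤ p → 1 ≤ q → 1 ≤ r → μ x (μ y z) + μ y (μ x z) ∈ lin F o S (p + q + r - 1)

variable {μ : A →ₗ[F] A →ₗ[F] A}

lemma mulHyp_mul (ho : IsUnitalSpan F o) (halt : IsDescAlternative F o) :
    MulHyp o S (LinearMap.mul F A) where
  hm hx hy := by simpa using mul_mem_lin ho hx hy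
  hI2 hx ha hp hq := by simpa using I2 ho halt hx ha hp hq
  hI3 hx hy hz hp hq hr := by simpa using I3 ho halt hx hy hz hp hq hr
  hI4 hx hy hz hp hq hr := by simpa using I4 ho halt hx hy hz hp hq hr

lemma mulHyp_flip (ho : IsUnitalSpan F o) (halt : IsDescAlternative F o) :
    MulHyp o S (LinearMap.mul F A).flip where
  hm hx hy := by
    simpa [Nat.add_comm] using mul_mem_lin ho hy hx
  hI2 hx ha hp hq := by simpa using I1 ho halt hx ha hp hq
  hI3 {p q r x y z} hx hy hz hp hq hr := by
    have := I4 ho halt hz hy hx hr hq hp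
    have e : r + q + p - 1 = p + q + r - 1 := by omega
    rw [e] at this
    simpa using this
  hI4 {p q r x y z} hx hy hz hp hq hr := by
    have := I3 ho halt hz hy hx hr hq hp
    have e : r + q + p - 1 = p + q + r - 1 := by omega
    rw [e] at this
    simpa using this

lemma rbw_nil (v : A) : rbw μ v [] = v := rfl

lemma rbw_cons (v a : A) (ts : List A) : rbw μ v (a :: ts) = μ (rbw μ v ts) a := rfl

lemma lbw_nil (X : A) : lbw μ X [] = X := rfl

lemma lbw_cons (X : A) (c : A × List A) (cs : List (A × List A)) :
    lbw μ X (c :: cs) = μ (rbw μ c.1 c.2) (lbw μ X cs) := rfl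

lemma lbw_append (X : A) (cs₁ cs₂ : List (A × List A)) :
    lbw μ X (cs₁ ++ cs₂) = lbw μ (lbw μ X cs₂) cs₁ := by
  induction cs₁ with
  | nil => rfl
  | cons c cs ih => simp [lbw_cons, ih]

lemma rbw_add (v w : A) (ts : List A) :
    rbw μ (v + w) ts = rbw μ v ts + rbw μ w ts := by
  induction ts with
  | nil => rfl
  | cons a ts ih => simp [rbw_cons, ih]

lemma rbw_smul (c : F) (v : A) (ts : List A) :
    rbw μ (c • v) ts = c • rbw μ v ts := by
  induction ts with
  | nil => rfl
  | cons a ts ih => simp [rbw_cons, ih]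

lemma rbw_zero (ts : List A) : rbw μ (0 : A) ts = 0 := by
  induction ts with
  | nil => rfl
  | cons a ts ih => simp [rbw_cons, ih]

lemma lbw_base_add (X Y : A) (cs : List (A × List A)) :
    lbw μ (X + Y) cs = lbw μ X cs + lbw μ Y cs := by
  induction cs with
  | nil => rfl
  | cons c cs ih => simp [lbw_cons, ih]

lemma lbw_base_smul (c : F) (X : A) (cs : List (A × List A)) :
    lbw μ (c • X) cs = c • lbw μ X cs := by
  induction cs with
  | nil => rfl
  | cons c' cs ih => simp [lbw_cons, ih]

lemma lbw_base_zero (cs : List (A × List A)) : lbw μ (0 : A) cs = 0 := by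
  induction cs with
  | nil => rfl
  | cons c cs ih => simp [lbw_cons, ih]

/-- All letters belong to `Lin₁`. -/
def csOK (o : Submodule F A) (S : Set A) (cs : List (A × List A)) : Prop :=
  ∀ c ∈ cs, c.1 ∈ lin F o S 1 ∧ ∀ a ∈ c.2, a ∈ lin F o S 1

lemma rbw_mem (H : MulHyp o S μ) {p : ℕ} {v : A} (hv : v ∈ lin F o S p)
    {ts : List A} (hts : ∀ a ∈ ts, a ∈ lin F o S 1) :
    rbw μ v ts ∈ lin F o S (p + ts.length) := by
  induction ts with
  | nil => simpa [rbw] using hv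
  | cons a ts ih =>
    have h := H.hm (ih (fun a ha => hts a (List.mem_cons_of_mem _ ha)))
      (hts a (List.mem_cons_self))
    have e : p + (a :: ts).length = p + ts.length + 1 := by
      simp only [List.length_cons]
      omega
    rw [rbw_cons, e]
    exact h

lemma lbw_mem (H : MulHyp o S μ) {p : ℕ} {X : A} (hX : X ∈ lin F o S p)
    {cs : List (A × List A)} (hcs : csOK o S cs) :
    lbw μ X cs ∈ lin F o S (p + wtL cs) := by
  induction cs with
  | nil => simpa [wtL, lbw] using hX
  | cons c cs ih =>
    have hc := hcs c (List.mem_cons_self)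
    have h1 : rbw μ c.1 c.2 ∈ lin F o S (1 + c.2.length) := rbw_mem H hc.1 hc.2
    have h2 := ih (fun c' hc' => hcs c' (List.mem_cons_of_mem _ hc'))
    have := H.hm h1 h2
    have e : 1 + c.2.length + (p + wtL cs) = p + wtL (c :: cs) := by
      simp [wtL]; omega
    rw [e] at this
    simpa [lbw_cons] using this

end NF

section NF2

variable {F}
variable [SMulCommClass F A A] [IsScalarTower F A A]
variable {o : Submodule F A} {S : Set A} {μ : A →ₗ[F] A →ₗ[F] A}

def lletters (ops : List (Bool × A)) : List A :=
  (ops.filter (fun p => p.1)).map Prod.snd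

lemma lletters_nil : lletters ([] : List (Bool × A)) = [] := rfl

lemma lletters_true (v : A) (ops : List (Bool × A)) :
    lletters ((true, v) :: ops) = v :: lletters ops := by
  simp [lletters]

lemma lletters_false (a : A) (ops : List (Bool × A)) :
    lletters ((false, a) :: ops) = lletters ops := by
  simp [lletters]

/-- Structural invariants of the normal form extraction. -/
lemma normOps_spec (ops : List (Bool × A)) (hops : ∀ p ∈ ops, p.2 ∈ lin F o S 1) :
    csOK o S (normOps ops).1 ∧ (∀ b ∈ (normOps ops).2, b ∈ lin F o S 1) ∧
    wtL (normOps ops).1 + (normOps ops).2.length = ops.length ∧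
    (normOps ops).1.map Prod.fst = lletters ops := by
  induction ops with
  | nil =>
    refine ⟨?_, ?_, ?_, ?_⟩ <;> simp [normOps, csOK, wtL, lletters_nil]
  | cons op ops ih =>
    obtain ⟨hcs, hbs, hwt, hld⟩ := ih (fun p hp => hops p (List.mem_cons_of_mem _ hp))
    have hop : op.2 ∈ lin F o S 1 := hops op (List.mem_cons_self)
    obtain ⟨b, a⟩ := op
    cases b
    · -- right multiplication
      rcases h : normOps ops with ⟨cs, bs⟩
      rw [h] at hcs hbs hwt hld
      dsimp only at hcs hbs hwt hld
      cases cs with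
      | nil =>
        have hn : normOps ((false, a) :: ops) = ([], a :: bs) := by
          simp [normOps, h]
        rw [hn]
        refine ⟨by simp [csOK], ?_, ?_, ?_⟩
        · intro b hb
          rcases List.mem_cons.mp hb with rfl | hb
          · exact hop
          · exact hbs b hb
        · simp only [wtL, List.map_nil, List.sum_nil, List.length_cons,
            List.length_nil] at hwt ⊢
          omega
        · rw [lletters_false]
          simpa using hld
      | cons c cs' =>
        obtain ⟨v, ts⟩ := c
        have hn : normOps ((false, a) :: ops) = ((v, a :: ts) :: cs', bs) := by
          simp [normOps, h]
        rw [hn]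
        have hc := hcs (v, ts) (List.mem_cons_self)
        refine ⟨?_, hbs, ?_, ?_⟩
        · intro c' hc'
          rcases List.mem_cons.mp hc' with rfl | hc'
          · refine ⟨hc.1, ?_⟩
            intro x hx
            rcases List.mem_cons.mp hx with rfl | hx
            · exact hop
            · exact hc.2 x hx
          · exact hcs c' (List.mem_cons_of_mem _ hc')
        · simp only [wtL, List.map_cons, List.sum_cons, List.length_cons] at hwt ⊢
          omega
        · rw [lletters_false]
          simpa using hld
    · -- left multiplication
      have hn : normOps ((true, a) :: ops) =
          ((a, []) :: (normOps ops).1, (normOps ops).2) := rfl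
      rw [hn]
      refine ⟨?_, hbs, ?_, ?_⟩
      · intro c' hc'
        rcases List.mem_cons.mp hc' with rfl | hc'
        · exact ⟨hop, by simp⟩
        · exact hcs c' hc'
      · simp only [wtL, List.map_cons, List.sum_cons, List.length_cons,
          List.length_nil] at hwt ⊢
        omega
      · rw [lletters_true]
        simpa using hld

/-- The normalisation theorem: a string equals its normal form modulo lower terms. -/
lemma evalw_norm (H : MulHyp o S μ) (ops : List (Bool × A)) (x₀ : A)
    (hops : ∀ p ∈ ops, p.2 ∈ lin F o S 1) (hx₀ : x₀ ∈ lin F o S 1) :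
    evalw μ ops x₀ ∈ lin F o S ops.length ⊔
      Submodule.span F {NFv μ x₀ (normOps ops)} := by
  induction ops with
  | nil =>
    exact Submodule.mem_sup_right (Submodule.subset_span rfl)
  | cons op ops ih =>
    obtain ⟨hcs, hbs, hwt, -⟩ :=
      normOps_spec ops (fun p hp => hops p (List.mem_cons_of_mem _ hp))
    have hop : op.2 ∈ lin F o S 1 := hops op (List.mem_cons_self)
    have hE := ih (fun p hp => hops p (List.mem_cons_of_mem _ hp))
    rcases Submodule.mem_sup.mp hE with ⟨y, hy, w, hw, hEeq⟩
    rcases Submodule.mem_span_singleton.mp hw with ⟨cf, rfl⟩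
    obtain ⟨b, a⟩ := op
    cases b
    · -- evalw = (evalw ops x₀) * a  (i.e. μ E a)
      have hEv : evalw μ ((false, a) :: ops) x₀ = μ (evalw μ ops x₀) a := by
        simp [evalw]
      rw [hEv, ← hEeq]
      have hya : μ y a ∈ lin F o S (ops.length + 1) :=
        H.hm hy hop
      rcases h : normOps ops with ⟨cs, bs⟩
      rw [h] at hcs hbs hwt
      dsimp only at hcs hbs hwt
      have hsplit : μ (y + cf • NFv μ x₀ (cs, bs)) a
          = μ y a + cf • μ (NFv μ x₀ (cs, bs)) a := by
        simp [map_add, map_smul]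
      rw [hsplit]
      cases cs with
      | nil =>
        have hn : normOps ((false, a) :: ops) = ([], a :: bs) := by
          simp [normOps, h]
        rw [hn]
        have hNF : μ (NFv μ x₀ (([] : List (A × List A)), bs)) a
            = NFv μ x₀ (([] : List (A × List A)), a :: bs) := rfl
        rw [hNF]
        refine Submodule.add_mem _ (Submodule.mem_sup_left (by simpa using hya)) ?_
        exact Submodule.smul_mem _ _ (Submodule.mem_sup_right (Submodule.subset_span rfl))
      | cons c cs' =>
        obtain ⟨v, ts⟩ := c
        have hn : normOps ((false, a) :: ops) = ((v, a :: ts) :: cs', bs) := by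
          simp [normOps, h]
        rw [hn]
        set Y := lbw μ (rbw μ x₀ bs) cs' with hY
        have hNold : NFv μ x₀ ((v, ts) :: cs', bs) = μ (rbw μ v ts) Y := rfl
        have hNnew : NFv μ x₀ ((v, a :: ts) :: cs', bs)
            = μ (rbw μ v (a :: ts)) Y := rfl
        have hcv := hcs (v, ts) (List.mem_cons_self)
        have hx : rbw μ v ts ∈ lin F o S (1 + ts.length) := rbw_mem H hcv.1 hcv.2
        have hXb : rbw μ x₀ bs ∈ lin F o S (1 + bs.length) := rbw_mem H hx₀ hbs
        have hYm : Y ∈ lin F o S (1 + bs.length + wtL cs') :=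
          lbw_mem H hXb (fun c' hc' => hcs c' (List.mem_cons_of_mem _ hc'))
        have herr : μ (μ (rbw μ v ts) Y) a + μ (μ (rbw μ v ts) a) Y
            ∈ lin F o S ((1 + ts.length) + (1 + bs.length + wtL cs') + 1 - 1) :=
          H.hI3 hx hYm hop (by omega) (by omega) (by omega)
        have hlen : (1 + ts.length) + (1 + bs.length + wtL cs') + 1 - 1
            = ops.length + 1 := by
          simp only [wtL, List.map_cons, List.sum_cons] at hwt ⊢
          omega
        rw [hlen] at herr
        have hdecomp : μ (NFv μ x₀ ((v, ts) :: cs', bs)) a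
            = (μ (μ (rbw μ v ts) Y) a + μ (μ (rbw μ v ts) a) Y)
              - NFv μ x₀ ((v, a :: ts) :: cs', bs) := by
          rw [hNold, hNnew, rbw_cons]
          abel
        rw [hdecomp]
        refine Submodule.add_mem _ (Submodule.mem_sup_left (by simpa using hya)) ?_
        refine Submodule.smul_mem _ _ (Submodule.sub_mem _ (Submodule.mem_sup_left herr) ?_)
        exact Submodule.mem_sup_right (Submodule.subset_span rfl)
    · -- evalw = a * evalw ops x₀
      have hEv : evalw μ ((true, a) :: ops) x₀ = μ a (evalw μ ops x₀) := by
        simp [evalw]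
      rw [hEv, ← hEeq]
      have hsplit : μ a (y + cf • NFv μ x₀ (normOps ops))
          = μ a y + cf • μ a (NFv μ x₀ (normOps ops)) := by
        simp [map_add, map_smul]
      rw [hsplit]
      have hay : μ a y ∈ lin F o S (1 + ops.length) := H.hm hop hy
      have hNF : μ a (NFv μ x₀ (normOps ops))
          = NFv μ x₀ (normOps ((true, a) :: ops)) := by
        simp [NFv, normOps, lbw_cons, rbw_nil]
      rw [hNF]
      refine Submodule.add_mem _
        (Submodule.mem_sup_left (by simpa [Nat.add_comm] using hay)) ?_
      exact Submodule.smul_mem _ _ (Submodule.mem_sup_right (Submodule.subset_span rfl))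

end NF2

section NF3

variable {F}
variable [SMulCommClass F A A] [IsScalarTower F A A]
variable {o : Submodule F A} {S : Set A} {μ : A →ₗ[F] A →ₗ[F] A}

lemma wtL_cons (c : A × List A) (cs : List (A × List A)) :
    wtL (c :: cs) = 1 + c.2.length + wtL cs := by
  simp only [wtL, List.map_cons, List.sum_cons]

lemma wtL_append (cs₁ cs₂ : List (A × List A)) :
    wtL (cs₁ ++ cs₂) = wtL cs₁ + wtL cs₂ := by
  simp [wtL]

lemma mem_of_sup_span {x N : A} {P : Submodule F A} (h : x ∈ P ⊔ Submodule.span F {N})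
    (hN : N ∈ P) : x ∈ P := by
  rcases Submodule.mem_sup.mp h with ⟨y, hy, w, hw, rfl⟩
  rcases Submodule.mem_span_singleton.mp hw with ⟨c, rfl⟩
  exact Submodule.add_mem _ hy (Submodule.smul_mem _ _ hN)

/-- Peeling the tail of a composite left multiplier into right multiplications of the base. -/
lemma peel (H : MulHyp o S μ) {v Z : A} {q : ℕ} (hv : v ∈ lin F o S 1)
    (hZ : Z ∈ lin F o S q) (hq : 1 ≤ q) :
    ∀ (ts : List A), (∀ a ∈ ts, a ∈ lin F o S 1) →
    μ (rbw μ v ts) Z ∈ lin F o S (ts.length + q) ⊔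
      Submodule.span F {rbw μ (μ v Z) ts} := by
  intro ts
  induction ts with
  | nil =>
    intro _
    exact Submodule.mem_sup_right (Submodule.subset_span rfl)
  | cons a ts ih =>
    intro hts
    have ha : a ∈ lin F o S 1 := hts a (List.mem_cons_self)
    have hts' : ∀ b ∈ ts, b ∈ lin F o S 1 := fun b hb => hts b (List.mem_cons_of_mem _ hb)
    have hx : rbw μ v ts ∈ lin F o S (1 + ts.length) := rbw_mem H hv hts'
    have herr : μ (μ (rbw μ v ts) a) Z + μ (μ (rbw μ v ts) Z) a
        ∈ lin F o S ((1 + ts.length) + 1 + q - 1) :=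
      H.hI3 hx ha hZ (by omega) le_rfl hq
    have hrec := ih hts'
    -- μ (μ (rbw v ts) Z) a ∈ lin (ts.length + q + 1) ⊔ span {rbw (μ v Z) (a :: ts)}
    have hstep : μ (μ (rbw μ v ts) Z) a ∈ lin F o S (ts.length + q + 1) ⊔
        Submodule.span F {rbw μ (μ v Z) (a :: ts)} := by
      rcases Submodule.mem_sup.mp hrec with ⟨y, hy, w, hw, heq⟩
      rcases Submodule.mem_span_singleton.mp hw with ⟨c, rfl⟩
      rw [← heq]
      have : μ (y + c • rbw μ (μ v Z) ts) a
          = μ y a + c • μ (rbw μ (μ v Z) ts) a := by simp [map_add, map_smul]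
      rw [this]
      refine Submodule.add_mem _ (Submodule.mem_sup_left (H.hm hy ha)) ?_
      refine Submodule.smul_mem _ _ (Submodule.mem_sup_right ?_)
      rw [rbw_cons]
      exact Submodule.subset_span rfl
    have hval : μ (rbw μ v (a :: ts)) Z
        = (μ (μ (rbw μ v ts) a) Z + μ (μ (rbw μ v ts) Z) a) - μ (μ (rbw μ v ts) Z) a := by
      rw [rbw_cons]; abel
    rw [hval]
    have hlen : (1 + ts.length) + 1 + q - 1 = (a :: ts).length + q := by
      simp only [List.length_cons]; omega
    rw [hlen] at herr
    have hlen2 : ts.length + q + 1 = (a :: ts).length + q := by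
      simp only [List.length_cons]; omega
    rw [hlen2] at hstep
    exact Submodule.sub_mem _ (Submodule.mem_sup_left herr) hstep

/-- Two adjacent left slots with the same leading letter vanish modulo lower terms. -/
lemma ZLadj (H : MulHyp o S μ) {u Y : A} {q : ℕ} {ts₁ ts₂ : List A}
    (hu : u ∈ lin F o S 1) (h1 : ∀ a ∈ ts₁, a ∈ lin F o S 1)
    (h2 : ∀ a ∈ ts₂, a ∈ lin F o S 1) (hY : Y ∈ lin F o S q) (hq : 1 ≤ q) :
    μ (rbw μ u ts₁) (μ (rbw μ u ts₂) Y) ∈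
      lin F o S (1 + ts₁.length + ts₂.length + q) := by
  have hc₂ : rbw μ u ts₂ ∈ lin F o S (1 + ts₂.length) := rbw_mem H hu h2
  have hZ : μ (rbw μ u ts₂) Y ∈ lin F o S (1 + ts₂.length + q) := H.hm hc₂ hY
  have hpeel := peel H hu hZ (by omega) ts₁ h1
  -- show the peeled element is in the lower space
  have hinner : μ u (μ (rbw μ u ts₂) Y) ∈ lin F o S (1 + ts₂.length + q) := by
    -- hI4 : μ u (μ c₂ Y) + μ c₂ (μ u Y) ∈ lin (1 + (1+|ts₂|) + q − 1)
    have herr := H.hI4 hu hc₂ hY le_rfl (by omega) hq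
    have e : 1 + (1 + ts₂.length) + q - 1 = 1 + ts₂.length + q := by omega
    rw [e] at herr
    have huY : μ u Y ∈ lin F o S (1 + q) := H.hm hu hY
    have hcuY : μ (rbw μ u ts₂) (μ u Y) ∈ lin F o S (1 + ts₂.length + q) := by
      have hp := peel H hu huY (by omega) ts₂ h2
      have hsq : μ u (μ u Y) ∈ lin F o S (q + 1) := by
        have := H.hI2 hY hu hq le_rfl
        have e2 : q + 2 * 1 - 1 = q + 1 := by omega
        rwa [e2] at this
      have hN : rbw μ (μ u (μ u Y)) ts₂ ∈ lin F o S (q + 1 + ts₂.length) :=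
        rbw_mem H hsq h2
      have := mem_of_sup_span hp (by
        have e3 : ts₂.length + (1 + q) = q + 1 + ts₂.length := by omega
        rwa [← e3] at hN)
      have e4 : ts₂.length + (1 + q) = 1 + ts₂.length + q := by omega
      rwa [e4] at this
    have : μ u (μ (rbw μ u ts₂) Y)
        = (μ u (μ (rbw μ u ts₂) Y) + μ (rbw μ u ts₂) (μ u Y))
          - μ (rbw μ u ts₂) (μ u Y) := by abel
    rw [this]
    exact Submodule.sub_mem _ herr hcuY
  have hN : rbw μ (μ u (μ (rbw μ u ts₂) Y)) ts₁
      ∈ lin F o S (1 + ts₂.length + q + ts₁.length) := rbw_mem H hinner h1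
  have := mem_of_sup_span hpeel (by
    have e : 1 + ts₂.length + q + ts₁.length = ts₁.length + (1 + ts₂.length + q) := by omega
    rwa [e] at hN)
  have e : ts₁.length + (1 + ts₂.length + q) = 1 + ts₁.length + ts₂.length + q := by omega
  rwa [e] at this

/-- A repeated leading letter (at the head and somewhere later) kills the block. -/
lemma ZLhead (H : MulHyp o S μ) {X u : A} {pX : ℕ} (hX : X ∈ lin F o S pX) (hpX : 1 ≤ pX)
    (hu : u ∈ lin F o S 1) {t₁ t₂ : List A}
    (h1 : ∀ a ∈ t₁, a ∈ lin F o S 1) (h2 : ∀ a ∈ t₂, a ∈ lin F o S 1) :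
    ∀ (q : List (A × List A)), csOK o S q → ∀ (r : List (A × List A)), csOK o S r →
    lbw μ X ((u, t₁) :: (q ++ (u, t₂) :: r)) ∈
      lin F o S (pX + wtL ((u, t₁) :: (q ++ (u, t₂) :: r)) - 1) := by
  intro q
  induction q with
  | nil =>
    intro _ r hr
    have hYr : lbw μ X r ∈ lin F o S (pX + wtL r) := lbw_mem H hX hr
    have := ZLadj H hu h1 h2 hYr (by omega)
    have e : 1 + t₁.length + t₂.length + (pX + wtL r)
        = pX + wtL ((u, t₁) :: ([] ++ (u, t₂) :: r)) - 1 := by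
      simp only [List.nil_append, wtL_cons]
      omega
    rw [e] at this
    simpa [lbw_cons] using this
  | cons c q ih =>
    intro hcq r hr
    have hc : c.1 ∈ lin F o S 1 ∧ ∀ a ∈ c.2, a ∈ lin F o S 1 :=
      hcq c (List.mem_cons_self)
    have hq : csOK o S q := fun c' hc' => hcq c' (List.mem_cons_of_mem _ hc')
    have hcOK : csOK o S (q ++ (u, t₂) :: r) := by
      intro c' hc'
      rcases List.mem_append.mp hc' with h' | h'
      · exact hq c' h'
      · rcases List.mem_cons.mp h' with rfl | h'
        · exact ⟨hu, h2⟩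
        · exact hr c' h'
    have hW : lbw μ X (q ++ (u, t₂) :: r) ∈ lin F o S (pX + wtL (q ++ (u, t₂) :: r)) :=
      lbw_mem H hX hcOK
    have hcc : rbw μ c.1 c.2 ∈ lin F o S (1 + c.2.length) := rbw_mem H hc.1 hc.2
    have hc₁ : rbw μ u t₁ ∈ lin F o S (1 + t₁.length) := rbw_mem H hu h1
    -- swap the two outermost slots
    have herr := H.hI4 hc₁ hcc hW (by omega) (by omega) (by omega)
    -- inner value with the repeated slot moved inside
    have hinner := ih hq r hr
    have hmul : μ (rbw μ c.1 c.2) (lbw μ X ((u, t₁) :: (q ++ (u, t₂) :: r)))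
        ∈ lin F o S ((1 + c.2.length) + (pX + wtL ((u, t₁) :: (q ++ (u, t₂) :: r)) - 1)) :=
      H.hm hcc hinner
    have hval : lbw μ X ((u, t₁) :: (c :: q ++ (u, t₂) :: r))
        = (μ (rbw μ u t₁) (μ (rbw μ c.1 c.2) (lbw μ X (q ++ (u, t₂) :: r)))
            + μ (rbw μ c.1 c.2) (μ (rbw μ u t₁) (lbw μ X (q ++ (u, t₂) :: r))))
          - μ (rbw μ c.1 c.2) (lbw μ X ((u, t₁) :: (q ++ (u, t₂) :: r))) := by
      simp only [lbw_cons, List.cons_append]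
      abel
    rw [hval]
    have e1 : (1 + t₁.length) + (1 + c.2.length) + (pX + wtL (q ++ (u, t₂) :: r)) - 1
        = pX + wtL ((u, t₁) :: (c :: q ++ (u, t₂) :: r)) - 1 := by
      simp only [wtL_cons, wtL_append, List.cons_append]
      omega
    rw [e1] at herr
    have e2 : (1 + c.2.length) + (pX + wtL ((u, t₁) :: (q ++ (u, t₂) :: r)) - 1)
        = pX + wtL ((u, t₁) :: (c :: q ++ (u, t₂) :: r)) - 1 := by
      simp only [wtL_cons, wtL_append, List.cons_append]
      omega
    rw [e2] at hmul
    exact Submodule.sub_mem _ herr hmul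

end NF3

section NF4

variable {F}
variable [SMulCommClass F A A] [IsScalarTower F A A]
variable {o : Submodule F A} {S : Set A} {μ : A →ₗ[F] A →ₗ[F] A}

/-- Wrapping an inner block inside an outer prefix of left multiplications. -/
lemma lbw_wrap (H : MulHyp o S μ) {Y : A} {m : ℕ} (hY : Y ∈ lin F o S m)
    {p : List (A × List A)} (hp : csOK o S p) :
    lbw μ Y p ∈ lin F o S (m + wtL p) := lbw_mem H hY hp

/-- Repeated leading letter anywhere kills the normal form. -/
lemma ZLfull (H : MulHyp o S μ) {X u : A} {pX : ℕ} (hX : X ∈ lin F o S pX) (hpX : 1 ≤ pX)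
    (hu : u ∈ lin F o S 1) {t₁ t₂ : List A}
    (h1 : ∀ a ∈ t₁, a ∈ lin F o S 1) (h2 : ∀ a ∈ t₂, a ∈ lin F o S 1)
    {p q r : List (A × List A)} (hp : csOK o S p) (hq : csOK o S q) (hr : csOK o S r) :
    lbw μ X (p ++ ((u, t₁) :: (q ++ (u, t₂) :: r))) ∈
      lin F o S (pX + wtL (p ++ ((u, t₁) :: (q ++ (u, t₂) :: r))) - 1) := by
  rw [lbw_append X p ((u, t₁) :: (q ++ (u, t₂) :: r))]
  have hinner := ZLhead H hX hpX hu h1 h2 q hq r hr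
  have := lbw_wrap H hinner hp
  have e : pX + wtL ((u, t₁) :: (q ++ (u, t₂) :: r)) - 1 + wtL p
      = pX + wtL (p ++ ((u, t₁) :: (q ++ (u, t₂) :: r))) - 1 := by
    simp only [wtL_cons, wtL_append]
    omega
  rwa [e] at this

lemma rbw_o (H : MulHyp o S μ) {z : A} (hz : z ∈ o) {ts : List A}
    (hts : ∀ a ∈ ts, a ∈ lin F o S 1) : rbw μ z ts ∈ lin F o S ts.length := by
  induction ts with
  | nil =>
    rw [← @lin_zero F _ A _ _ o S] at hz
    exact hz
  | cons a ts ih =>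
    have := H.hm (ih (fun b hb => hts b (List.mem_cons_of_mem _ hb)))
      (hts a (List.mem_cons_self))
    simpa [rbw_cons] using this

/-- A slot whose leading letter lies in `o` kills one unit of weight. -/
lemma ZOfull (H : MulHyp o S μ) {X z : A} {pX : ℕ} (hX : X ∈ lin F o S pX)
    (hz : z ∈ o) {ts : List A} (hts : ∀ a ∈ ts, a ∈ lin F o S 1)
    {p r : List (A × List A)} (hp : csOK o S p) (hr : csOK o S r) :
    lbw μ X (p ++ (z, ts) :: r) ∈
      lin F o S (pX + wtL (p ++ (z, ts) :: r) - 1) := by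
  rw [lbw_append X p ((z, ts) :: r)]
  have hYr : lbw μ X r ∈ lin F o S (pX + wtL r) := lbw_mem H hX hr
  have hinner : lbw μ X ((z, ts) :: r) ∈ lin F o S (ts.length + (pX + wtL r)) := by
    rw [lbw_cons]
    exact H.hm (rbw_o H hz hts) hYr
  have := lbw_wrap H hinner hp
  have e : ts.length + (pX + wtL r) + wtL p = pX + wtL (p ++ (z, ts) :: r) - 1 := by
    simp only [wtL_cons, wtL_append]
    omega
  rwa [e] at this

/-- Splitting a list along a decomposition of its image under `map`. -/
lemma map_split {α β : Type*} (f : α → β) :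
    ∀ (l : List α) (L₁ : List β) (y : β) (L₂ : List β), l.map f = L₁ ++ y :: L₂ →
      ∃ l₁ c l₂, l = l₁ ++ c :: l₂ ∧ l₁.map f = L₁ ∧ f c = y ∧ l₂.map f = L₂ := by
  intro l
  induction l with
  | nil =>
    intro L₁ y L₂ h
    simp only [List.map_nil] at h
    exact absurd h (by simp)
  | cons a l ih =>
    intro L₁ y L₂ h
    cases L₁ with
    | nil =>
      simp only [List.map_cons, List.nil_append] at h
      exact ⟨[], a, l, rfl, rfl, (List.cons.injEq _ _ _ _ ▸ h).1,
        (List.cons.injEq _ _ _ _ ▸ h).2⟩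
    | cons b L₁ =>
      simp only [List.map_cons, List.cons_append, List.cons.injEq] at h
      obtain ⟨l₁, c, l₂, rfl, hm1, hc, hm2⟩ := ih L₁ y L₂ h.2
      exact ⟨a :: l₁, c, l₂, rfl, by simp [h.1, hm1], hc, hm2⟩

/-- The value of the normal form as a function of the leading letter of one slot. -/
lemma slot_apply (X w : A) (ts : List A) (cs₁ cs₂ : List (A × List A)) :
    lbw μ X (cs₁ ++ (w, ts) :: cs₂) = lbw μ (μ (rbw μ w ts) (lbw μ X cs₂)) cs₁ := by
  rw [lbw_append X cs₁ ((w, ts) :: cs₂)]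
  rfl

lemma slot_add (X : A) (ts : List A) (cs₁ cs₂ : List (A × List A)) (w w' : A) :
    lbw μ X (cs₁ ++ (w + w', ts) :: cs₂)
      = lbw μ X (cs₁ ++ (w, ts) :: cs₂) + lbw μ X (cs₁ ++ (w', ts) :: cs₂) := by
  rw [slot_apply, slot_apply, slot_apply, rbw_add]
  simp [map_add, lbw_base_add]

lemma slot_smul (X : A) (ts : List A) (cs₁ cs₂ : List (A × List A)) (cf : F) (w : A) :
    lbw μ X (cs₁ ++ (cf • w, ts) :: cs₂) = cf • lbw μ X (cs₁ ++ (w, ts) :: cs₂) := by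
  rw [slot_apply, slot_apply, rbw_smul]
  simp [map_smul, lbw_base_smul]

lemma slot_zero (X : A) (ts : List A) (cs₁ cs₂ : List (A × List A)) :
    lbw μ X (cs₁ ++ ((0 : A), ts) :: cs₂) = 0 := by
  rw [slot_apply, rbw_zero]
  simp [lbw_base_zero]

end NF4

section NF5

variable {F}
variable [SMulCommClass F A A] [IsScalarTower F A A]
variable {o : Submodule F A} {S : Set A} {μ : A →ₗ[F] A →ₗ[F] A}

/-- If there are more than `dd` slots, where `dd = dim Lin₁ - dim Lin₀`, then the
normal form lies in the span of lower-weight elements. -/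
lemma depNF (H : MulHyp o S μ) {dd : ℕ}
    (hdep : ∀ l : List A, (∀ v ∈ l, v ∈ lin F o S 1) → dd + 1 ≤ l.length →
      ∃ l₁ v l₂, l = l₁ ++ v :: l₂ ∧ v ∈ o ⊔ Submodule.span F {x | x ∈ l₁})
    {cs : List (A × List A)} {bs : List A} {x₀ : A}
    (hcs : csOK o S cs) (hbs : ∀ b ∈ bs, b ∈ lin F o S 1) (hx₀ : x₀ ∈ lin F o S 1)
    (hlen : dd + 1 ≤ cs.length) :
    NFv μ x₀ (cs, bs) ∈ lin F o S (1 + bs.length + wtL cs - 1) := by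
  have hleads : ∀ v ∈ cs.map Prod.fst, v ∈ lin F o S 1 := by
    intro v hv
    rcases List.mem_map.mp hv with ⟨c, hc, rfl⟩
    exact (hcs c hc).1
  obtain ⟨L₁, v, L₂, hsp, hv⟩ := hdep (cs.map Prod.fst) hleads
    (by simpa using hlen)
  obtain ⟨cs₁, c, cs₂, rfl, hm1, hfst, hm2⟩ := map_split Prod.fst cs L₁ v L₂ hsp
  obtain ⟨v', ts⟩ := c
  simp only at hfst
  subst hfst
  -- memberships
  have hcs₁ : csOK o S cs₁ := fun c' hc' => hcs c' (by simp [hc'])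
  have hcs₂ : csOK o S cs₂ := fun c' hc' => hcs c' (by simp [hc'])
  have hts : ∀ a ∈ ts, a ∈ lin F o S 1 :=
    (hcs (v', ts) (by simp)).2
  set X := rbw μ x₀ bs with hXdef
  have hX : X ∈ lin F o S (1 + bs.length) := rbw_mem H hx₀ hbs
  have hpX : 1 ≤ 1 + bs.length := by omega
  set N := 1 + bs.length + (wtL cs₁ + (1 + ts.length) + wtL cs₂) - 1 with hN
  have hNeq : 1 + bs.length + wtL (cs₁ ++ (v', ts) :: cs₂) - 1 = N := by
    simp only [hN, wtL_append, wtL_cons]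
    omega
  rw [hNeq]
  show lbw μ X (cs₁ ++ (v', ts) :: cs₂) ∈ lin F o S N
  -- the slot function is linear in the leading letter; decompose v' = z + w
  rcases Submodule.mem_sup.mp hv with ⟨z, hz, w, hw, hvw⟩
  rw [← hvw]
  rw [slot_add]
  refine Submodule.add_mem _ ?_ ?_
  · -- o-part
    have := ZOfull H hX hz hts hcs₁ hcs₂
    have e : 1 + bs.length + wtL (cs₁ ++ (z, ts) :: cs₂) - 1 = N := by
      simp only [hN, wtL_append, wtL_cons]
      omega
    rwa [e] at this
  · -- span part: induction over the span of earlier leading letters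
    clear hvw
    induction hw using Submodule.span_induction with
    | mem u hu =>
      have huL : u ∈ L₁ := hu
      rw [← hm1] at huL
      rcases List.mem_map.mp huL with ⟨c', hc'mem, hc'fst⟩
      obtain ⟨p', q', hsplit'⟩ := List.append_of_mem hc'mem
      obtain ⟨u1, t1⟩ := c'
      simp only at hc'fst
      subst hc'fst
      subst hsplit'
      have hu1 : u1 ∈ lin F o S 1 := (hcs₁ (u1, t1) (by simp)).1
      have ht1 : ∀ a ∈ t1, a ∈ lin F o S 1 := (hcs₁ (u1, t1) (by simp)).2
      have hp' : csOK o S p' := fun c'' hc'' => hcs₁ c'' (by simp [hc''])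
      have hq' : csOK o S q' := fun c'' hc'' => hcs₁ c'' (by simp [hc''])
      have hlist : (p' ++ (u1, t1) :: q') ++ (u1, ts) :: cs₂
          = p' ++ ((u1, t1) :: (q' ++ (u1, ts) :: cs₂)) := by
        simp [List.append_assoc]
      rw [hlist]
      have := ZLfull H hX hpX hu1 ht1 hts hp' hq' hcs₂
      have e : 1 + bs.length + wtL (p' ++ ((u1, t1) :: (q' ++ (u1, ts) :: cs₂))) - 1
          = N := by
        simp only [hN, wtL_append, wtL_cons]
        omega
      rwa [e] at this
    | zero =>
      rw [slot_zero]
      exact Submodule.zero_mem _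
    | add a b _ _ ha hb =>
      rw [slot_add]
      exact Submodule.add_mem _ ha hb
    | smul cf a _ ha =>
      rw [slot_smul]
      exact Submodule.smul_mem _ _ ha

/-- The main abstract lemma: a string with more than `dd` left multiplications
collapses into lower terms. -/
lemma mainL (H : MulHyp o S μ) {dd : ℕ}
    (hdep : ∀ l : List A, (∀ v ∈ l, v ∈ lin F o S 1) → dd + 1 ≤ l.length →
      ∃ l₁ v l₂, l = l₁ ++ v :: l₂ ∧ v ∈ o ⊔ Submodule.span F {x | x ∈ l₁})
    {ops : List (Bool × A)} {x₀ : A}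
    (hops : ∀ p ∈ ops, p.2 ∈ lin F o S 1) (hx₀ : x₀ ∈ lin F o S 1)
    (hL : dd + 1 ≤ (lletters ops).length) :
    evalw μ ops x₀ ∈ lin F o S ops.length := by
  obtain ⟨hcs, hbs, hwt, hld⟩ := normOps_spec ops hops
  have hlen : dd + 1 ≤ (normOps ops).1.length := by
    rw [← hld] at hL
    simpa using hL
  rcases h : normOps ops with ⟨cs, bs⟩
  rw [h] at hcs hbs hwt hlen
  dsimp only at hcs hbs hwt hlen
  have hNF := depNF H hdep hcs hbs hx₀ hlen
  have e : 1 + bs.length + wtL cs - 1 = ops.length := by omega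
  rw [e] at hNF
  have hnorm := evalw_norm H ops x₀ hops hx₀
  rw [h] at hnorm
  exact mem_of_sup_span hnorm hNF

end NF5

section Master

variable {F}
variable [SMulCommClass F A A] [IsScalarTower F A A]
variable {o : Submodule F A} {S : Set A}

lemma dseq_one : dseq F o S 1
    = Module.finrank F (lin F o S 1) - Module.finrank F (lin F o S 0) := rfl

lemma evalOps_eq_evalw (ops : List (Bool × A)) (x₀ : A) :
    evalOps ops x₀ = evalw (LinearMap.mul F A) ops x₀ := by
  induction ops with
  | nil => rfl
  | cons op ops ih =>
    obtain ⟨b, a⟩ := op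
    cases b <;> simp [evalOps, evalw, ih]

def negOps (ops : List (Bool × A)) : List (Bool × A) := ops.map (fun p => (!p.1, p.2))

lemma evalw_flip (μ : A →ₗ[F] A →ₗ[F] A) (ops : List (Bool × A)) (x₀ : A) :
    evalw μ.flip (negOps ops) x₀ = evalw μ ops x₀ := by
  induction ops with
  | nil => rfl
  | cons op ops ih =>
    obtain ⟨b, a⟩ := op
    simp only [negOps] at ih
    cases b <;> simp [negOps, evalw, ih]

lemma evalw_last_false (μ : A →ₗ[F] A →ₗ[F] A) (ops : List (Bool × A)) (a x₀ : A) :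
    evalw μ (ops ++ [(false, a)]) x₀ = evalw μ (ops ++ [(true, x₀)]) a := by
  induction ops with
  | nil => rfl
  | cons op ops ih =>
    obtain ⟨b, c⟩ := op
    cases b <;> simp [evalw, ih]

lemma evalw_last_true (μ : A →ₗ[F] A →ₗ[F] A) (ops : List (Bool × A)) (a x₀ : A) :
    evalw μ (ops ++ [(true, a)]) x₀ = evalw μ (ops ++ [(false, x₀)]) a := by
  induction ops with
  | nil => rfl
  | cons op ops ih =>
    obtain ⟨b, c⟩ := op
    cases b <;> simp [evalw, ih]

lemma lletters_append (l₁ l₂ : List (Bool × A)) :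
    lletters (l₁ ++ l₂) = lletters l₁ ++ lletters l₂ := by
  simp [lletters]

lemma lletters_total (ops : List (Bool × A)) :
    (lletters ops).length + (lletters (negOps ops)).length = ops.length := by
  induction ops with
  | nil => rfl
  | cons op ops ih =>
    obtain ⟨b, a⟩ := op
    cases b <;> simp only [negOps, List.map_cons, lletters_true, lletters_false,
      List.length_cons, Bool.not_true, Bool.not_false] at ih ⊢ <;> omega

/-- Existence of a dependent letter among more than `d₁` elements of `Lin₁`. -/
lemma dep_exists [FiniteDimensional F A] :
    ∀ l : List A, (∀ v ∈ l, v ∈ lin F o S 1) → dseq F o S 1 + 1 ≤ l.length →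
      ∃ l₁ v l₂, l = l₁ ++ v :: l₂ ∧ v ∈ o ⊔ Submodule.span F {x | x ∈ l₁} := by
  have aux : ∀ l : List A,
      (∃ l₁ v l₂, l = l₁ ++ v :: l₂ ∧ v ∈ o ⊔ Submodule.span F {x | x ∈ l₁}) ∨
      Module.finrank F o + l.length ≤
        Module.finrank F (o ⊔ Submodule.span F {x | x ∈ l} : Submodule F A) := by
    intro l
    induction l using List.reverseRecOn with
    | nil =>
      right
      have : {x : A | x ∈ ([] : List A)} = (∅ : Set A) := by simp
      rw [this, Submodule.span_empty, sup_bot_eq]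
      simp
    | append_singleton l v ih =>
      rcases ih with ⟨l₁, u, l₂, rfl, hu⟩ | hrk
      · left
        exact ⟨l₁, u, l₂ ++ [v], by simp, hu⟩
      · by_cases hv : v ∈ o ⊔ Submodule.span F {x | x ∈ l}
        · left
          exact ⟨l, v, [], rfl, hv⟩
        · right
          have hset : {x : A | x ∈ l ++ [v]} = {x | x ∈ l} ∪ {v} := by
            ext x; simp [List.mem_append, or_comm]
          have heq : (o ⊔ Submodule.span F {x : A | x ∈ l ++ [v]} : Submodule F A)
              = (o ⊔ Submodule.span F {x | x ∈ l}) ⊔ Submodule.span F {v} := by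
            rw [hset, Submodule.span_union, sup_assoc]
          have hlt : (o ⊔ Submodule.span F {x : A | x ∈ l} : Submodule F A)
              < (o ⊔ Submodule.span F {x | x ∈ l}) ⊔ Submodule.span F {v} := by
            refine lt_of_le_of_ne le_sup_left (fun hEq => hv ?_)
            rw [hEq]
            exact Submodule.mem_sup_right (Submodule.mem_span_singleton_self v)
          have := Submodule.finrank_lt_finrank_of_lt hlt
          rw [heq]
          simp only [List.length_append, List.length_singleton]
          omega
  intro l hl hlen
  rcases aux l with h | hrk
  · exact h
  · exfalso
    have hle : (o ⊔ Submodule.span F {x : A | x ∈ l} : Submodule F A) ≤ lin F o S 1 :=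
      sup_le o_le_lin (Submodule.span_le.mpr hl)
    have h1 := Submodule.finrank_mono hle
    have h2 : Module.finrank F o ≤ Module.finrank F (lin F o S 1) :=
      Submodule.finrank_mono o_le_lin
    have h3 : dseq F o S 1
        = Module.finrank F (lin F o S 1) - Module.finrank F o := by
      rw [dseq_one, lin_zero]
    omega

/-- Strings of `2 d₁` one-letter multiplications collapse. -/
lemma master (ho : IsUnitalSpan F o) (halt : IsDescAlternative F o)
    [FiniteDimensional F A] {ops : List (Bool × A)} {x₀ : A}
    (hops : ∀ p ∈ ops, p.2 ∈ lin F o S 1) (hx₀ : x₀ ∈ lin F o S 1)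
    (hd1 : 1 ≤ dseq F o S 1) (hlen : ops.length = 2 * dseq F o S 1) :
    evalw (LinearMap.mul F A) ops x₀ ∈ lin F o S (2 * dseq F o S 1) := by
  set dd := dseq F o S 1 with hdd
  have Hm : MulHyp o S (LinearMap.mul F A) := mulHyp_mul ho halt
  have Hf : MulHyp o S (LinearMap.mul F A).flip := mulHyp_flip ho halt
  have hdep := dep_exists (o := o) (S := S) (F := F)
  have hnegmem : ∀ (l : List (Bool × A)), (∀ p ∈ l, p.2 ∈ lin F o S 1) →
      ∀ p ∈ negOps l, p.2 ∈ lin F o S 1 := by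
    intro l hl p hp
    rcases List.mem_map.mp hp with ⟨q, hq, rfl⟩
    exact hl q hq
  by_cases hL : dd + 1 ≤ (lletters ops).length
  · rw [← hlen]
    exact mainL Hm hdep hops hx₀ hL
  by_cases hR : dd + 1 ≤ (lletters (negOps ops)).length
  · rw [← evalw_flip (LinearMap.mul F A) ops x₀]
    have hlen' : (negOps ops).length = 2 * dd := by
      simp [negOps, hlen]
    rw [← hlen']
    exact mainL Hf hdep (hnegmem ops hops) hx₀ hR
  -- both sides have exactly dd letters; convert the innermost operation
  push_neg at hL hR
  have htot := lletters_total ops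
  have hLd : (lletters ops).length = dd := by omega
  have hRd : (lletters (negOps ops)).length = dd := by omega
  have hne : ops ≠ [] := by
    intro h
    rw [h] at hlen
    simp at hlen
    omega
  obtain ⟨ops', op, rfl⟩ : ∃ l p, ops = l ++ [p] := by
    rcases List.eq_nil_or_concat ops with h | ⟨l, p, h⟩
    · exact absurd h hne
    · rw [List.concat_eq_append] at h
      exact ⟨l, p, h⟩
  obtain ⟨b, a⟩ := op
  have ha : a ∈ lin F o S 1 := hops (b, a) (by simp)
  have hops' : ∀ p ∈ ops', p.2 ∈ lin F o S 1 := fun p hp => hops p (by simp [hp])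
  cases b
  · -- innermost is a right multiplication: rewrite base as a left multiplier
    rw [evalw_last_false]
    have hlen2 : (ops' ++ [((true : Bool), x₀)]).length = 2 * dd := by
      simpa using by simpa using hlen
    rw [← hlen2]
    apply mainL Hm hdep ?_ ha ?_
    · intro p hp
      rcases List.mem_append.mp hp with h | h
      · exact hops' p h
      · rcases List.mem_singleton.mp h with rfl
        exact hx₀
    · rw [lletters_append, lletters_true, lletters_nil]
      have : (lletters (ops' ++ [((false : Bool), a)])).length
          = (lletters ops').length := by
        rw [lletters_append, lletters_false, lletters_nil]
        simp
      simp only [List.length_append, List.length_cons, List.length_nil]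
      omega
  · -- innermost is a left multiplication: rewrite base as a right multiplier and flip
    rw [evalw_last_true]
    rw [← evalw_flip (LinearMap.mul F A) (ops' ++ [((false : Bool), x₀)]) a]
    have hlen2 : (negOps (ops' ++ [((false : Bool), x₀)])).length = 2 * dd := by
      simp only [negOps, List.length_map, List.length_append, List.length_singleton]
      simpa using hlen
    rw [← hlen2]
    apply mainL Hf hdep ?_ ha ?_
    · apply hnegmem
      intro p hp
      rcases List.mem_append.mp hp with h | h
      · exact hops' p h
      · rcases List.mem_singleton.mp h with rfl
        exact hx₀
    · have hnegsplit : negOps (ops' ++ [((false : Bool), x₀)])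
          = negOps ops' ++ [((true : Bool), x₀)] := by
        simp [negOps]
      rw [hnegsplit, lletters_append, lletters_true, lletters_nil]
      have : (lletters (negOps (ops' ++ [((true : Bool), a)]))).length
          = (lletters (negOps ops')).length := by
        have : negOps (ops' ++ [((true : Bool), a)])
            = negOps ops' ++ [((false : Bool), a)] := by
          simp [negOps]
        rw [this, lletters_append, lletters_false, lletters_nil]
        simp
      simp only [List.length_append, List.length_cons, List.length_nil]
      omega

end Master

section Final

variable {F}
variable [SMulCommClass F A A] [IsScalarTower F A A]
variable {o : Submodule F A} {S : Set A}

lemma S_subset_lin1 : S ⊆ (lin F o S 1 : Set A) :=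
  fun s hs => word_mem_lin le_rfl le_rfl (Word.of hs)

lemma Ev_kill (ho : IsUnitalSpan F o) (halt : IsDescAlternative F o)
    [FiniteDimensional F A] :
    Ev S (2 * dseq F o S 1) ⊆ (lin F o S (2 * dseq F o S 1) : Set A) := by
  rcases Nat.eq_zero_or_pos (dseq F o S 1) with hd | hd
  · -- degenerate case: Lin₁ = Lin₀
    have h01 : lin F o S 0 = lin F o S 1 := by
      apply Submodule.eq_of_le_of_finrank_le (lin_mono (by omega))
      have h2 : Module.finrank F (lin F o S 0) ≤ Module.finrank F (lin F o S 1) :=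
        Submodule.finrank_mono (lin_mono (by omega))
      have h3 := dseq_one (F := F) (o := o) (S := S)
      omega
    rw [hd]
    rintro a ⟨ops, x₀, hlen, hmem, hx₀, rfl⟩
    have : ops = [] := List.length_eq_zero_iff.mp (by omega)
    subst this
    show evalOps [] x₀ ∈ lin F o S (2 * 0)
    have : x₀ ∈ lin F o S 1 := S_subset_lin1 hx₀
    rw [← h01] at this
    simpa [evalOps] using this
  · rintro a ⟨ops, x₀, hlen, hmem, hx₀, rfl⟩
    rw [evalOps_eq_evalw (F := F) ops x₀]
    exact master ho halt (fun p hp => S_subset_lin1 (hmem p hp)) (S_subset_lin1 hx₀)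
      hd hlen

lemma lin_stab (ho : IsUnitalSpan F o) (halt : IsDescAlternative F o)
    [FiniteDimensional F A] :
    ∀ t, lin F o S (2 * dseq F o S 1 + t) = lin F o S (2 * dseq F o S 1) ∧
      Ev S (2 * dseq F o S 1 + t) ⊆ (lin F o S (2 * dseq F o S 1) : Set A) := by
  intro t
  induction t with
  | zero => exact ⟨rfl, Ev_kill ho halt⟩
  | succ t ih =>
    have hlin : lin F o S (2 * dseq F o S 1 + (t + 1)) = lin F o S (2 * dseq F o S 1) := by
      apply le_antisymm
      · have h1 : lin F o S (2 * dseq F o S 1 + t + 1) ≤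
            lin F o S (2 * dseq F o S 1 + t) ⊔
            Submodule.span F (Ev S (2 * dseq F o S 1 + t)) :=
          lin_succ_le ho halt _
        have h2 : Submodule.span F (Ev S (2 * dseq F o S 1 + t))
            ≤ lin F o S (2 * dseq F o S 1) := Submodule.span_le.mpr ih.2
        have e : 2 * dseq F o S 1 + (t + 1) = 2 * dseq F o S 1 + t + 1 := by omega
        rw [e]
        exact h1.trans (sup_le ih.1.le h2)
      · exact lin_mono (by omega)
    refine ⟨hlin, ?_⟩
    intro a ha
    have e : 2 * dseq F o S 1 + (t + 1) = (2 * dseq F o S 1 + t) + 1 := by omega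
    rw [e] at ha
    rcases Ev_succ_subset ha with ⟨s, hs, c, hc, hx | hx⟩ <;> subst hx
    · have : s * c ∈ lin F o S (1 + 2 * dseq F o S 1) :=
        mul_mem_lin ho (S_subset_lin1 hs) (ih.2 hc)
      have h1 : lin F o S (1 + 2 * dseq F o S 1) ≤ lin F o S (2 * dseq F o S 1) := by
        have h2 : lin F o S (1 + 2 * dseq F o S 1)
            ≤ lin F o S (2 * dseq F o S 1 + (t + 1)) := lin_mono (by omega)
        exact h2.trans hlin.le
      exact h1 this
    · have : c * s ∈ lin F o S (2 * dseq F o S 1 + 1) :=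
        mul_mem_lin ho (ih.2 hc) (S_subset_lin1 hs)
      have h1 : lin F o S (2 * dseq F o S 1 + 1) ≤ lin F o S (2 * dseq F o S 1) := by
        have : lin F o S (2 * dseq F o S 1 + 1)
            ≤ lin F o S (2 * dseq F o S 1 + (t + 1)) := lin_mono (by omega)
        exact this.trans hlin.le
      exact h1 this

lemma linInfty_eq (ho : IsUnitalSpan F o) (halt : IsDescAlternative F o)
    [FiniteDimensional F A] :
    linInfty F o S = lin F o S (2 * dseq F o S 1) := by
  apply le_antisymm
  · apply iSup_le
    intro k
    rcases le_or_gt k (2 * dseq F o S 1) with h | h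
    · exact lin_mono h
    · have : k = 2 * dseq F o S 1 + (k - 2 * dseq F o S 1) := by omega
      rw [this]
      exact (lin_stab ho halt _).1.le
  · exact le_iSup _ (2 * dseq F o S 1)

end Final

/-- If `A` is descendingly alternative, then
`Lin_{2d₁(S)+1}(S) = Lin_{2d₁(S)}(S)` and consequently `l(S) ≤ 2d₁(S)`,
where `d₁(S) = dim Lin_1(S) - dim Lin_0(S)`. -/
theorem len_le_two_d1_of_descAlternative {F A : Type*} [Field F] [NonUnitalNonAssocRing A]
    [Module F A] [SMulCommClass F A A] [IsScalarTower F A A] [FiniteDimensional F A]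
    (o : Submodule F A) (ho : IsUnitalSpan F o) (halt : IsDescAlternative F o) (S : Set A) :
    lin F o S (2 * dseq F o S 1 + 1) = lin F o S (2 * dseq F o S 1) ∧
    len F o S ≤ 2 * dseq F o S 1 := by
  constructor
  · have h1 : lin F o S (2 * dseq F o S 1 + 1) = lin F o S (2 * dseq F o S 1) :=
      (lin_stab ho halt 1).1
    exact h1
  · apply Nat.sInf_le
    show lin F o S (2 * dseq F o S 1) = linInfty F o S
    exact (linInfty_eq ho halt).symm



end DescLength
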